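/- Let γ be a Gamma random variable with shape α > 0 and scale V > 0 (density x^{α−1} e^{−x/V}/(Γ(α) V^α) on (0,∞)). Then E[(1 − e^{−γ/V})^{−1}] = ∑_{k≥1} k^{−α} = ζ(α) for α > 1. -/

import Mathlib

open MeasureTheory Real

lemma aux_integrable10 {a r : ℝ} (ha : 0 < a) (hr : 0 < r) :
    MeasureTheory.IntegrableOn (fun t : ℝ => t ^ (a - 1) * Real.exp (-(r * t)))
      (Set.Ioi 0) := by
  have h0 : MeasureTheory.IntegrableOn (fun t : ℝ => Real.exp (-t) * t ^ (a - 1))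
      (Set.Ioi (0:ℝ)) := Real.GammaIntegral_convergent ha
  have h1 : MeasureTheory.IntegrableOn
      (fun t : ℝ => Real.exp (-(r * t)) * (r * t) ^ (a - 1)) (Set.Ioi (0:ℝ)) :=
    (integrableOn_Ioi_comp_mul_left_iff
      (fun t : ℝ => Real.exp (-t) * t ^ (a - 1)) 0 hr).mpr (by simpa using h0)
  have h2 : MeasureTheory.IntegrableOn
      (fun t : ℝ => r ^ (1 - a) * (Real.exp (-(r * t)) * (r * t) ^ (a - 1)))
      (Set.Ioi (0:ℝ)) := h1.const_mul (r ^ (1 - a))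
  refine h2.congr_fun (fun t ht => ?_) measurableSet_Ioi
  have ht' : (0:ℝ) < t := ht
  beta_reduce
  rw [Real.mul_rpow hr.le ht'.le]
  rw [show r ^ (1 - a) * (Real.exp (-(r * t)) * (r ^ (a - 1) * t ^ (a - 1)))
      = (r ^ (1 - a) * r ^ (a - 1)) * (t ^ (a - 1) * Real.exp (-(r * t))) by ring,
    ← Real.rpow_add hr]
  norm_num

/-- For a Gamma(α, V) random variable γ (density `x^{α-1} e^{-x/V}/(Γ(α) V^α)` on `(0,∞)`)
with `α > 1`, `E[(1 - e^{-γ/V})⁻¹] = ∑_{k ≥ 1} k^{-α} = ζ(α)`. -/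
theorem stmt10 (α V : ℝ) (hα : 1 < α) (hV : 0 < V) :
    ∫ x in Set.Ioi (0 : ℝ),
        (1 - Real.exp (-x / V))⁻¹ * (x ^ (α - 1) * Real.exp (-x / V) / (Real.Gamma α * V ^ α))
      = ∑' k : ℕ, ((k : ℝ) + 1) ^ (-α) := by
  have hα0 : 0 < α := by linarith
  set C : ℝ := Real.Gamma α * V ^ α with hC
  have hCpos : 0 < C := mul_pos (Real.Gamma_pos_of_pos hα0) (Real.rpow_pos_of_pos hV α)
  set F : ℕ → ℝ → ℝ := fun k x => x ^ (α - 1) * Real.exp (-((((k:ℝ) + 1) / V) * x)) / C with hF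
  have hk1 : ∀ k : ℕ, (0:ℝ) < (k:ℝ) + 1 := fun k => by positivity
  -- integrability of each term
  have hint : ∀ k : ℕ, MeasureTheory.IntegrableOn (F k) (Set.Ioi 0) := fun k =>
    (aux_integrable10 hα0 (div_pos (hk1 k) hV)).div_const C
  -- nonnegativity of each term on Ioi 0
  have hnn : ∀ k : ℕ, ∀ x ∈ Set.Ioi (0:ℝ), 0 ≤ F k x := by
    intro k x hx
    have : (0:ℝ) < x := hx
    rw [hF]
    positivity
  -- value of each integral
  have hval : ∀ k : ℕ, ∫ x in Set.Ioi (0:ℝ), F k x = ((k:ℝ) + 1) ^ (-α) := by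
    intro k
    have hr : (0:ℝ) < ((k:ℝ) + 1) / V := div_pos (hk1 k) hV
    have hkα : (0:ℝ) < ((k:ℝ) + 1) ^ α := Real.rpow_pos_of_pos (hk1 k) α
    have hVα : (0:ℝ) < V ^ α := Real.rpow_pos_of_pos hV α
    rw [hF]
    simp only
    rw [MeasureTheory.integral_div, Real.integral_rpow_mul_exp_neg_mul_Ioi hα0 hr, hC,
      one_div, inv_div, Real.div_rpow hV.le (hk1 k).le, Real.rpow_neg (hk1 k).le]
    field_simp
  -- measurability
  have hmeas : ∀ k : ℕ, AEStronglyMeasurable (F k)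
      (MeasureTheory.volume.restrict (Set.Ioi (0:ℝ))) := fun k => ((hint k).1)
  -- lintegral of the nnnorm of each term
  have hlint : ∀ k : ℕ, ∫⁻ x in Set.Ioi (0:ℝ), (‖F k x‖₊ : ENNReal)
      = ENNReal.ofReal (((k:ℝ) + 1) ^ (-α)) := by
    intro k
    rw [← hval k, MeasureTheory.ofReal_integral_eq_lintegral_ofReal (hint k)
      ((ae_restrict_iff' measurableSet_Ioi).mpr (MeasureTheory.ae_of_all _ (hnn k)))]
    refine MeasureTheory.lintegral_congr_ae ?_
    filter_upwards [(ae_restrict_iff' measurableSet_Ioi).mpr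
      (MeasureTheory.ae_of_all _ (hnn k))] with x hx
    rw [← Real.enorm_eq_ofReal hx, enorm_eq_nnnorm]
  -- summability
  have hsum : Summable (fun k : ℕ => ((k:ℝ) + 1) ^ (-α)) := by
    have h1 : Summable (fun n : ℕ => (n:ℝ) ^ (-α)) :=
      Real.summable_nat_rpow.mpr (by linarith)
    have := (summable_nat_add_iff 1).mpr h1
    refine this.congr fun n => ?_
    push_cast
    ring_nf
  -- pointwise expansion
  have key : Set.EqOn
      (fun x : ℝ => (1 - Real.exp (-x / V))⁻¹ * (x ^ (α - 1) * Real.exp (-x / V) / C))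
      (fun x : ℝ => ∑' k : ℕ, F k x) (Set.Ioi 0) := by
    intro x hx
    have hx' : (0:ℝ) < x := hx
    have hr0 : (0:ℝ) < Real.exp (-x / V) := Real.exp_pos _
    have hr1 : Real.exp (-x / V) < 1 := by
      rw [Real.exp_lt_one_iff]
      exact div_neg_of_neg_of_pos (neg_neg_of_pos hx') hV
    have hFk : ∀ k : ℕ, F k x
        = x ^ (α - 1) / C * Real.exp (-x / V) * Real.exp (-x / V) ^ k := by
      intro k
      rw [hF]
      simp only
      rw [show x ^ (α - 1) / C * Real.exp (-x / V) * Real.exp (-x / V) ^ k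
          = x ^ (α - 1) / C * Real.exp (-x / V) ^ (k + 1) by ring, ← Real.exp_nat_mul]
      push_cast
      rw [show ((k:ℝ) + 1) * (-x / V) = -(((k:ℝ) + 1) / V * x) by ring]
      ring
    simp only
    rw [tsum_congr hFk, tsum_mul_left, tsum_geometric_of_lt_one hr0.le hr1]
    ring
  rw [MeasureTheory.setIntegral_congr_fun measurableSet_Ioi key,
    MeasureTheory.integral_tsum hmeas ?_]
  · exact tsum_congr fun k => hval k
  · rw [show (∑' i : ℕ, ∫⁻ a in Set.Ioi (0:ℝ), ‖F i a‖ₑ) = ∑' k : ℕ, ENNReal.ofReal (((k:ℝ) + 1) ^ (-α)) from tsum_congr hlint, ← ENNReal.ofReal_tsum_of_nonneg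
      (fun k => Real.rpow_nonneg (hk1 k).le _) hsum]
    exact ENNReal.ofReal_ne_top
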